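/- Let a ≠ 0, 0 < s ≤ 1, α² + a² = s², |β| ≤ 1, |γ| ≤ s/20, and D the closed unit disc in ℝ². Define v_±(x,y) = α + βy + γx ± s^{−1}γ²(20 − 4x² − 4y²). Then Q(v₊) ≤ 0 and Q(v₋) ≥ 0 on D, where Q(v) = ∂/∂x[(v² + y² + a²)^{−1/2} ∂v/∂x] + 2 ∂²v/∂y². -/

import Mathlib

/-- The divergence-form quasilinear operator
`Q(v) = ∂/∂x[(v² + y² + a²)^{-1/2} ∂v/∂x] + 2 ∂²v/∂y²`. -/
noncomputable def Qop (a : ℝ) (v : ℝ × ℝ → ℝ) (p : ℝ × ℝ) : ℝ :=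
  fderiv ℝ (fun q => ((v q) ^ 2 + q.2 ^ 2 + a ^ 2) ^ (-(1 : ℝ) / 2)
      * fderiv ℝ v q ((1 : ℝ), (0 : ℝ))) p ((1 : ℝ), (0 : ℝ))
  + 2 * fderiv ℝ (fun q => fderiv ℝ v q ((0 : ℝ), (1 : ℝ))) p ((0 : ℝ), (1 : ℝ))

lemma hasFDerivAt_v (A B C D : ℝ) (q : ℝ × ℝ) :
    HasFDerivAt (fun q : ℝ × ℝ => A + B * q.2 + C * q.1 + D * (20 - 4 * q.1 ^ 2 - 4 * q.2 ^ 2))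
      ((C - 8 * D * q.1) • ContinuousLinearMap.fst ℝ ℝ ℝ
        + (B - 8 * D * q.2) • ContinuousLinearMap.snd ℝ ℝ ℝ) q := by
  have h1 : HasFDerivAt (fun q : ℝ × ℝ => q.1) (ContinuousLinearMap.fst ℝ ℝ ℝ) q := hasFDerivAt_fst
  have h2 : HasFDerivAt (fun q : ℝ × ℝ => q.2) (ContinuousLinearMap.snd ℝ ℝ ℝ) q := hasFDerivAt_snd
  have h := (((h2.const_mul B).const_add A).add (h1.const_mul C)).add
    ((((h1.mul h1).const_mul 4).add ((h2.mul h2).const_mul 4)).const_sub 20 |>.const_mul D)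
  have hfe : (fun q : ℝ × ℝ => A + B * q.2 + C * q.1 + D * (20 - 4 * q.1 ^ 2 - 4 * q.2 ^ 2))
      = (fun x : ℝ × ℝ => A + B * x.2 + C * x.1 + D * (20 - (4 * (x.1 * x.1) + 4 * (x.2 * x.2)))) := by
    funext x; ring
  rw [hfe]
  refine h.congr_fderiv ?_
  ext w <;> simp <;> ring

lemma fderiv_v_x (A B C D : ℝ) (q : ℝ × ℝ) :
    fderiv ℝ (fun q : ℝ × ℝ => A + B * q.2 + C * q.1 + D * (20 - 4 * q.1 ^ 2 - 4 * q.2 ^ 2)) q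
      ((1:ℝ), (0:ℝ)) = C - 8 * D * q.1 := by
  rw [(hasFDerivAt_v A B C D q).fderiv]; simp

lemma fderiv_v_y (A B C D : ℝ) (q : ℝ × ℝ) :
    fderiv ℝ (fun q : ℝ × ℝ => A + B * q.2 + C * q.1 + D * (20 - 4 * q.1 ^ 2 - 4 * q.2 ^ 2)) q
      ((0:ℝ), (1:ℝ)) = B - 8 * D * q.2 := by
  rw [(hasFDerivAt_v A B C D q).fderiv]; simp

lemma Qop_eval (a A B C D : ℝ) (ha : a ≠ 0) (p : ℝ × ℝ) :
    Qop a (fun q : ℝ × ℝ => A + B * q.2 + C * q.1 + D * (20 - 4 * q.1 ^ 2 - 4 * q.2 ^ 2)) p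
    = - ((A + B * p.2 + C * p.1 + D * (20 - 4 * p.1 ^ 2 - 4 * p.2 ^ 2)) ^ 2 + p.2 ^ 2 + a ^ 2) ^ (-(3:ℝ)/2)
        * (A + B * p.2 + C * p.1 + D * (20 - 4 * p.1 ^ 2 - 4 * p.2 ^ 2)) * (C - 8 * D * p.1) ^ 2
      - 8 * D * ((A + B * p.2 + C * p.1 + D * (20 - 4 * p.1 ^ 2 - 4 * p.2 ^ 2)) ^ 2 + p.2 ^ 2 + a ^ 2) ^ (-(1:ℝ)/2)
      - 16 * D := by
  unfold Qop
  set v : ℝ × ℝ → ℝ := fun q => A + B * q.2 + C * q.1 + D * (20 - 4 * q.1 ^ 2 - 4 * q.2 ^ 2) with hv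
  have hFpos : 0 < (v p) ^ 2 + p.2 ^ 2 + a ^ 2 := by positivity
  have e1 : (fun q : ℝ × ℝ => ((v q) ^ 2 + q.2 ^ 2 + a ^ 2) ^ (-(1:ℝ)/2) * fderiv ℝ v q ((1:ℝ),(0:ℝ)))
      = (fun q : ℝ × ℝ => ((v q) ^ 2 + q.2 ^ 2 + a ^ 2) ^ (-(1:ℝ)/2) * (C - 8 * D * q.1)) :=
    funext fun q => by rw [hv, fderiv_v_x]
  have e2 : (fun q : ℝ × ℝ => fderiv ℝ v q ((0:ℝ),(1:ℝ))) = (fun q : ℝ × ℝ => B - 8 * D * q.2) :=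
    funext fun q => by rw [hv, fderiv_v_y]
  rw [e1, e2]
  have h2 : HasFDerivAt (fun q : ℝ × ℝ => B - 8 * D * q.2)
      (-((8*D) • ContinuousLinearMap.snd ℝ ℝ ℝ)) p := by
    have := (hasFDerivAt_snd (𝕜 := ℝ) (p := p)).const_mul (8*D) |>.const_sub B
    convert this using 1
  have hvp : HasFDerivAt v ((C - 8 * D * p.1) • ContinuousLinearMap.fst ℝ ℝ ℝ
        + (B - 8 * D * p.2) • ContinuousLinearMap.snd ℝ ℝ ℝ) p := hasFDerivAt_v A B C D p
  set L := (C - 8 * D * p.1) • ContinuousLinearMap.fst ℝ ℝ ℝ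
        + (B - 8 * D * p.2) • ContinuousLinearMap.snd ℝ ℝ ℝ with hL
  have hF : HasFDerivAt (fun q : ℝ × ℝ => (v q) ^ 2 + q.2 ^ 2 + a ^ 2)
      (((2 * v p ^ 1) • L) + ((2 * p.2 ^ 1) • ContinuousLinearMap.snd ℝ ℝ ℝ)) p := by
    exact ((hasDerivAt_pow 2 (v p)).comp_hasFDerivAt p hvp).add
      (((hasDerivAt_pow 2 p.2).comp_hasFDerivAt p hasFDerivAt_snd)) |>.add_const (a^2)
  have hrpow := hF.rpow_const (p := (-(1:ℝ)/2)) (Or.inl (ne_of_gt hFpos))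
  have hlin : HasFDerivAt (fun q : ℝ × ℝ => C - 8 * D * q.1)
      (-((8*D) • ContinuousLinearMap.fst ℝ ℝ ℝ)) p := by
    have := (hasFDerivAt_fst (𝕜 := ℝ) (p := p)).const_mul (8*D) |>.const_sub C
    convert this using 1
  have hG : HasFDerivAt (fun q : ℝ × ℝ => ((v q) ^ 2 + q.2 ^ 2 + a ^ 2) ^ (-(1:ℝ)/2) * (C - 8 * D * q.1)) _ p :=
    hrpow.mul hlin
  rw [hG.fderiv, h2.fderiv, hL]
  simp only [ContinuousLinearMap.add_apply, ContinuousLinearMap.smul_apply,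
    ContinuousLinearMap.coe_fst', ContinuousLinearMap.coe_snd', ContinuousLinearMap.neg_apply,
    smul_eq_mul, pow_one]
  have hexp : ((v p) ^ 2 + p.2 ^ 2 + a ^ 2) ^ (-(1:ℝ)/2 - 1)
      = ((v p) ^ 2 + p.2 ^ 2 + a ^ 2) ^ (-(3:ℝ)/2) := by norm_num
  rw [hexp]
  ring

/-- Clean form of the lower bound `F ≥ s²/16`. -/
lemma F_lower' (a s α β w y : ℝ) (hs0 : 0 < s) (hα : α ^ 2 + a ^ 2 = s ^ 2)
    (hβ : |β| ≤ 1) (hw : |w| ≤ s / 10) (hy2 : y ^ 2 ≤ 1) :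
    s ^ 2 / 16 ≤ (α + β * y + w) ^ 2 + y ^ 2 + a ^ 2 := by
  obtain ⟨hw1, hw2⟩ := abs_le.mp hw
  obtain ⟨hb1, hb2⟩ := abs_le.mp hβ
  rcases le_or_gt (s ^ 2 / 16) (y ^ 2) with hy | hy
  · nlinarith [sq_nonneg (α + β * y + w), sq_nonneg a]
  · have hy1 : -(s/4) ≤ y := by nlinarith [sq_nonneg (y + s/4)]
    have hy2' : y ≤ s/4 := by nlinarith [sq_nonneg (y - s/4)]
    have hby1 : -(s/4) ≤ β * y := by nlinarith [mul_nonneg (sub_nonneg.2 hb2) (sub_nonneg.2 hy2'), mul_nonneg (sub_nonneg.2 (neg_le.mp hb1)) (sub_nonneg.2 (neg_le.mp hy1))]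
    have hby2 : β * y ≤ s/4 := by nlinarith [mul_nonneg (sub_nonneg.2 hb2) (sub_nonneg.2 (neg_le.mp hy1)), mul_nonneg (sub_nonneg.2 (neg_le.mp hb1)) (sub_nonneg.2 hy2')]
    rcases le_or_gt (3 * s / 5) |α| with hA | hA
    · rcases abs_cases α with ⟨he, _⟩ | ⟨he, _⟩
      · -- α ≥ 3s/5, so α + βy + w ≥ s/4
        have ht : s / 4 ≤ α + β * y + w := by rw [he] at hA; linarith
        nlinarith [sq_nonneg y, sq_nonneg a]
      · -- α ≤ -3s/5
        have ht : α + β * y + w ≤ -(s / 4) := by rw [he] at hA; linarith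
        nlinarith [sq_nonneg y, sq_nonneg a]
    · have h1 : α ^ 2 < 9 * s ^ 2 / 25 := by
        nlinarith [sq_abs α, abs_nonneg α]
      linarith [sq_nonneg (α + β * y + w), sq_nonneg y, sq_nonneg s]

set_option maxHeartbeats 1000000 in
/-- The key estimate on the nonlinear term. -/
lemma side_bound (a s α β γ D' : ℝ) (ha : a ≠ 0) (hs0 : 0 < s) (hs1 : s ≤ 1)
    (hα : α ^ 2 + a ^ 2 = s ^ 2) (hβ : |β| ≤ 1) (hγ : |γ| ≤ s / 20)
    (hD : |D'| ≤ s⁻¹ * γ ^ 2) (p : ℝ × ℝ) (hp : p.1 ^ 2 + p.2 ^ 2 ≤ 1) :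
    |((α + β * p.2 + γ * p.1 + D' * (20 - 4 * p.1 ^ 2 - 4 * p.2 ^ 2)) ^ 2 + p.2 ^ 2 + a ^ 2) ^ (-(3:ℝ)/2)
      * (α + β * p.2 + γ * p.1 + D' * (20 - 4 * p.1 ^ 2 - 4 * p.2 ^ 2)) * (γ - 8 * D' * p.1) ^ 2|
    ≤ 8 * (s⁻¹ * γ ^ 2)
      * ((α + β * p.2 + γ * p.1 + D' * (20 - 4 * p.1 ^ 2 - 4 * p.2 ^ 2)) ^ 2 + p.2 ^ 2 + a ^ 2) ^ (-(1:ℝ)/2) := by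
  have hγ20 : s⁻¹ * γ ^ 2 ≤ |γ| / 20 := by
    have h1 : γ ^ 2 ≤ s / 20 * |γ| := by
      rw [← sq_abs]; nlinarith [mul_nonneg (sub_nonneg.2 hγ) (abs_nonneg γ)]
    have h2 := mul_le_mul_of_nonneg_left h1 (inv_nonneg.mpr hs0.le)
    calc s⁻¹ * γ ^ 2 ≤ s⁻¹ * (s / 20 * |γ|) := h2
      _ = |γ| / 20 := by field_simp
  have hD20 : |D'| ≤ |γ| / 20 := hD.trans hγ20
  have hx2 : p.1 ^ 2 ≤ 1 := by nlinarith [sq_nonneg p.2]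
  have hy2 : p.2 ^ 2 ≤ 1 := by nlinarith [sq_nonneg p.1]
  have hxabs : |p.1| ≤ 1 := by
    rw [abs_le]
    constructor <;> nlinarith [sq_nonneg (p.1 + 1), sq_nonneg (p.1 - 1)]
  have hq : 0 ≤ 20 - 4 * p.1 ^ 2 - 4 * p.2 ^ 2 := by nlinarith
  have hq20 : 20 - 4 * p.1 ^ 2 - 4 * p.2 ^ 2 ≤ 20 := by nlinarith [sq_nonneg p.1, sq_nonneg p.2]
  -- bound on the perturbation w
  have hw : |γ * p.1 + D' * (20 - 4 * p.1 ^ 2 - 4 * p.2 ^ 2)| ≤ s / 10 := by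
    have h1 : |γ * p.1| ≤ s / 20 := by
      rw [abs_mul]
      calc |γ| * |p.1| ≤ (s/20) * 1 :=
            mul_le_mul hγ hxabs (abs_nonneg p.1) (by linarith [abs_nonneg γ, hγ])
        _ = s / 20 := by ring
    have h2 : |D' * (20 - 4 * p.1 ^ 2 - 4 * p.2 ^ 2)| ≤ s / 20 := by
      rw [abs_mul, abs_of_nonneg hq]
      calc |D'| * (20 - 4 * p.1 ^ 2 - 4 * p.2 ^ 2) ≤ (|γ|/20) * 20 :=
            mul_le_mul hD20 hq20 hq (by positivity)
        _ = |γ| := by ring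
        _ ≤ s / 20 := hγ
    calc |γ * p.1 + D' * (20 - 4 * p.1 ^ 2 - 4 * p.2 ^ 2)|
        ≤ |γ * p.1| + |D' * (20 - 4 * p.1 ^ 2 - 4 * p.2 ^ 2)| := abs_add_le _ _
      _ ≤ s / 10 := by linarith
  set vp := α + β * p.2 + γ * p.1 + D' * (20 - 4 * p.1 ^ 2 - 4 * p.2 ^ 2) with hvp
  set Fp := vp ^ 2 + p.2 ^ 2 + a ^ 2 with hFp
  have hF0 : 0 < Fp := by positivity
  have hFlow : s ^ 2 / 16 ≤ Fp := by
    have h := F_lower' a s α β (γ * p.1 + D' * (20 - 4 * p.1 ^ 2 - 4 * p.2 ^ 2)) p.2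
      hs0 hα hβ hw hy2
    have he : (α + β * p.2 + (γ * p.1 + D' * (20 - 4 * p.1 ^ 2 - 4 * p.2 ^ 2))) ^ 2 = vp ^ 2 := by
      rw [hvp]; ring
    rw [he] at h
    rw [hFp]; linarith
  set r := Real.sqrt Fp with hr
  have hr0 : 0 < r := Real.sqrt_pos.mpr hF0
  have hrs : s / 4 ≤ r := by
    rw [hr, show s / 4 = Real.sqrt ((s/4)^2) from (Real.sqrt_sq (by positivity)).symm]
    apply Real.sqrt_le_sqrt; nlinarith
  have hvpr : |vp| ≤ r := Real.abs_le_sqrt (by nlinarith [sq_nonneg p.2, sq_nonneg a])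
  have hvx : (γ - 8 * D' * p.1) ^ 2 ≤ 2 * γ ^ 2 := by
    have h1 : |γ - 8 * D' * p.1| ≤ 7 / 5 * |γ| := by
      calc |γ - 8 * D' * p.1| ≤ |γ| + |8 * D' * p.1| := abs_sub _ _
        _ ≤ |γ| + 8 * (|γ|/20) * 1 := by
            rw [abs_mul, abs_mul]
            have h8 : |(8:ℝ)| = 8 := by norm_num
            rw [h8]
            have := mul_le_mul (mul_le_mul_of_nonneg_left hD20 (by norm_num : (0:ℝ) ≤ 8))
              hxabs (abs_nonneg p.1) (by positivity)
            linarith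
        _ = 7 / 5 * |γ| := by ring
    have h2 := pow_le_pow_left₀ (abs_nonneg _) h1 2
    rw [sq_abs] at h2
    nlinarith [sq_abs γ, sq_nonneg γ]
  have hm1 : Fp ^ (-(1:ℝ)/2) = r⁻¹ := by
    rw [show (-(1:ℝ)/2) = -(1/2) by norm_num, Real.rpow_neg hF0.le, hr, Real.sqrt_eq_rpow]
  have hm3 : Fp ^ (-(3:ℝ)/2) = (r ^ 3)⁻¹ := by
    rw [show (-(3:ℝ)/2) = -(1/2 * (3:ℕ)) by norm_num, Real.rpow_neg hF0.le,
      Real.rpow_mul hF0.le, Real.rpow_natCast, hr, Real.sqrt_eq_rpow]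
  rw [hm1, hm3]
  have hL : |(r ^ 3)⁻¹ * vp * (γ - 8 * D' * p.1) ^ 2|
      = (r ^ 3)⁻¹ * |vp| * (γ - 8 * D' * p.1) ^ 2 := by
    rw [abs_mul, abs_mul, abs_of_nonneg (by positivity : (0:ℝ) ≤ (r ^ 3)⁻¹),
      abs_of_nonneg (sq_nonneg (γ - 8 * D' * p.1))]
  rw [hL]
  calc (r ^ 3)⁻¹ * |vp| * (γ - 8 * D' * p.1) ^ 2
      ≤ (r ^ 3)⁻¹ * r * (2 * γ ^ 2) := by
        gcongr
    _ ≤ 8 * (s⁻¹ * γ ^ 2) * r⁻¹ := by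
        rw [show (r ^ 3)⁻¹ * r * (2 * γ ^ 2) = 2 * γ ^ 2 / r ^ 2 by
              field_simp,
            show 8 * (s⁻¹ * γ ^ 2) * r⁻¹ = 8 * γ ^ 2 / (s * r) by
              field_simp]
        rw [div_le_div_iff₀ (by positivity) (by positivity)]
        nlinarith [mul_nonneg (mul_nonneg (sq_nonneg γ)
          (sub_nonneg.2 (by linarith : s ≤ 4 * r))) hr0.le]

/-- Proposition 4.8: `v₊` is a supersolution and `v₋` a subsolution of `Q(v) = 0`
on the closed unit disc. -/
theorem stmt_7 (a s α β γ : ℝ) (ha : a ≠ 0) (hs0 : 0 < s) (hs1 : s ≤ 1)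
    (hα : α ^ 2 + a ^ 2 = s ^ 2) (hβ : |β| ≤ 1) (hγ : |γ| ≤ s / 20) :
    ∀ p : ℝ × ℝ, p.1 ^ 2 + p.2 ^ 2 ≤ 1 →
      Qop a (fun q => α + β * q.2 + γ * q.1
          + s⁻¹ * γ ^ 2 * (20 - 4 * q.1 ^ 2 - 4 * q.2 ^ 2)) p ≤ 0 ∧
      0 ≤ Qop a (fun q => α + β * q.2 + γ * q.1
          - s⁻¹ * γ ^ 2 * (20 - 4 * q.1 ^ 2 - 4 * q.2 ^ 2)) p := by
  intro p hp
  have hc0 : (0:ℝ) ≤ s⁻¹ * γ ^ 2 := by positivity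
  constructor
  · rw [Qop_eval a α β γ (s⁻¹ * γ ^ 2) ha p]
    have hb := side_bound a s α β γ (s⁻¹ * γ ^ 2) ha hs0 hs1 hα hβ hγ
      (by rw [abs_of_nonneg hc0]) p hp
    obtain ⟨h1, h2⟩ := abs_le.mp hb
    linarith
  · have e : (fun q : ℝ × ℝ => α + β * q.2 + γ * q.1
        - s⁻¹ * γ ^ 2 * (20 - 4 * q.1 ^ 2 - 4 * q.2 ^ 2))
      = (fun q : ℝ × ℝ => α + β * q.2 + γ * q.1
        + (-(s⁻¹ * γ ^ 2)) * (20 - 4 * q.1 ^ 2 - 4 * q.2 ^ 2)) := by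
      funext q; ring
    rw [e, Qop_eval a α β γ (-(s⁻¹ * γ ^ 2)) ha p]
    have hb := side_bound a s α β γ (-(s⁻¹ * γ ^ 2)) ha hs0 hs1 hα hβ hγ
      (by rw [abs_neg, abs_of_nonneg hc0]) p hp
    obtain ⟨h1, h2⟩ := abs_le.mp hb
    linarith
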